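/- For a genus g hyperelliptic Lefschetz fibration satisfying the signature bound σ ≤ n − s − 4, the slope satisfies the double estimate 4(g−1)/g + (4s/g)·((2g+1)(3g−4))/(ng + 4s(g−1)) ≤ λ ≤ 10 − 2(2+s)/(n−2). -/

import Mathlib

set_option maxHeartbeats 1000000


/-- For a genus `g` hyperelliptic Lefschetz fibration
satisfying the signature bound `σ ≤ n - s - 4`, the slope satisfies the double
estimate
`4(g-1)/g + (4s/g)·((2g+1)(3g-4))/(ng + 4s(g-1)) ≤ λ ≤ 10 - 2(2+s)/(n-2)`. -/
theorem slope_double_estimate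
    (g n : ℕ) (hg : 2 ≤ g) (hn : 0 < n)
    (sh : ℕ → ℕ)
    (s x σ χ χh c₁sq lam : ℚ)
    (hs : s = ∑ h ∈ Finset.Icc 1 (g / 2), (sh h : ℚ))
    (hx : x = ∑ h ∈ Finset.Icc 1 (g / 2), (h : ℚ) * ((g : ℚ) - (h : ℚ)) * (sh h : ℚ))
    (hσ : σ = -(((g : ℚ) + 1) / (2 * (g : ℚ) + 1)) * (n : ℚ)
            + 4 * x / (2 * (g : ℚ) + 1) - s)
    (hχ : χ = (n : ℚ) + s - 4 * ((g : ℚ) - 1))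
    (hχh : χh = (σ + χ) / 4)
    (hc : c₁sq = 2 * χ + 3 * σ)
    (hlam : lam = (c₁sq + 8 * ((g : ℚ) - 1)) / (χh + (g : ℚ) - 1))
    (hbound : σ ≤ (n : ℚ) - s - 4) :
    4 * ((g : ℚ) - 1) / (g : ℚ)
        + (4 * s / (g : ℚ)) * ((2 * (g : ℚ) + 1) * (3 * (g : ℚ) - 4))
            / ((n : ℚ) * (g : ℚ) + 4 * s * ((g : ℚ) - 1)) ≤ lam ∧
    lam ≤ 10 - 2 * (2 + s) / ((n : ℚ) - 2) := by
  have hg2 : (2 : ℚ) ≤ (g : ℚ) := by exact_mod_cast hg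
  have hn1 : (1 : ℚ) ≤ (n : ℚ) := by exact_mod_cast hn
  have hs0 : 0 ≤ s := by
    rw [hs]; positivity
  -- x ≥ (g-1) * s
  have hxs : ((g : ℚ) - 1) * s ≤ x := by
    rw [hx, hs, Finset.mul_sum]
    apply Finset.sum_le_sum
    intro h hh
    obtain ⟨h1, h2⟩ := Finset.mem_Icc.mp hh
    have h1' : (1 : ℚ) ≤ (h : ℚ) := by exact_mod_cast h1
    have h2' : (h : ℚ) + 1 ≤ (g : ℚ) := by
      have : h + 1 ≤ g := by omega
      exact_mod_cast this
    have hsh : (0 : ℚ) ≤ (sh h : ℚ) := by positivity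
    nlinarith [mul_nonneg (mul_nonneg (sub_nonneg.2 h1')
      (sub_nonneg.2 (by linarith : (h : ℚ) ≤ (g : ℚ) - 1))) hsh]
  have hx0 : 0 ≤ x := le_trans (by nlinarith) hxs
  have h2g1 : (0 : ℚ) < 2 * (g : ℚ) + 1 := by linarith
  have hden : (0 : ℚ) < (n : ℚ) * (g : ℚ) + 4 * x := by nlinarith
  -- signature bound in polynomial form
  have h4x : 4 * x = (σ + s) * (2 * (g : ℚ) + 1) + ((g : ℚ) + 1) * (n : ℚ) := by
    rw [hσ]; field_simp; ring
  have hbound' : 4 * x ≤ (3 * (g : ℚ) + 2) * (n : ℚ) - 4 * (2 * (g : ℚ) + 1) := by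
    nlinarith [hbound, h4x, h2g1]
  have hn2 : (2 : ℚ) < (n : ℚ) := by nlinarith
  -- closed form for the slope
  have hD : χh + (g : ℚ) - 1
      = ((n : ℚ) * (g : ℚ) + 4 * x) / (4 * (2 * (g : ℚ) + 1)) := by
    rw [hχh, hχ, hσ]; field_simp; ring
  have hlam' : lam = 4 * ((n : ℚ) * ((g : ℚ) - 1) + 12 * x - (2 * (g : ℚ) + 1) * s)
      / ((n : ℚ) * (g : ℚ) + 4 * x) := by
    have h1 : ((n : ℚ) * (g : ℚ) + 4 * x) ≠ 0 := ne_of_gt hden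
    have h2 : (2 * (g : ℚ) + 1) ≠ 0 := ne_of_gt h2g1
    rw [hlam, hD, hc, hχ, hσ]
    field_simp
    ring
  have hd2 : (0 : ℚ) < (n : ℚ) * (g : ℚ) + 4 * s * ((g : ℚ) - 1) := by nlinarith
  constructor
  · have hlow : 4 * ((g : ℚ) - 1) / (g : ℚ)
        + (4 * s / (g : ℚ)) * ((2 * (g : ℚ) + 1) * (3 * (g : ℚ) - 4))
            / ((n : ℚ) * (g : ℚ) + 4 * s * ((g : ℚ) - 1))
        = 4 * (((g : ℚ) - 1) * (n : ℚ) + (10 * (g : ℚ) - 13) * s)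
            / ((n : ℚ) * (g : ℚ) + 4 * s * ((g : ℚ) - 1)) := by
      have hgpos : ((g : ℚ)) ≠ 0 := by positivity
      have hd2' : ((n : ℚ) * (g : ℚ) + 4 * s * ((g : ℚ) - 1)) ≠ 0 := ne_of_gt hd2
      rw [div_mul_eq_mul_div, div_div, div_add_div _ _ hgpos (mul_ne_zero hgpos hd2'),
        div_eq_div_iff (mul_ne_zero hgpos (mul_ne_zero hgpos hd2')) hd2']
      ring
    rw [hlow, hlam', div_le_div_iff₀ hd2 hden]
    nlinarith [mul_nonneg (mul_nonneg (le_of_lt h2g1) (by linarith : (0:ℚ) ≤ (n:ℚ) + s))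
      (sub_nonneg.2 hxs)]
  · rw [hlam']
    have hkey : 10 - 2 * (2 + s) / ((n : ℚ) - 2)
        = (10 * ((n : ℚ) - 2) - 2 * (2 + s)) / ((n : ℚ) - 2) := by
      have hne : ((n : ℚ) - 2) ≠ 0 := by linarith
      field_simp
    rw [hkey, div_le_div_iff₀ hden (by linarith : (0:ℚ) < (n : ℚ) - 2)]
    nlinarith [mul_nonneg (by linarith : (0:ℚ) ≤ (n:ℚ) + s)
      (sub_nonneg.2 hbound')]
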